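/- Let p be an odd prime, k a positive integer, and let 0 ≤ x < p^k with x ∉ S_p^k. Write x = Σ_i d_i p^i in base p and let S = {i : d_i = p-1}. For 0 ≤ j < p-1 define x_j = Σ_i d_i^{(j)} p^i, where d_i^{(j)} = d_i if i ∉ S and d_i^{(j)} = j if i ∈ S. Then x_0 < x_1 < ... < x_{p-2} < x is an arithmetic progression, and each x_j lies in S_p^k; in particular the canonical covering {x_0, ..., x_{p-2}} is contained in S_p^k and p-covers x. -/

import Mathlib

open scoped Classical

/-- A set of naturals is `p`-free if it contains no `p`-term arithmetic
progression with positive common difference. -/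
def IsPFree (p : ℕ) (A : Set ℕ) : Prop :=
  ¬ ∃ a d : ℕ, 0 < d ∧ ∀ i < p, a + i * d ∈ A

/-- `A` `p`-covers `x`: there are `x₁ < x₂ < ⋯ < x_{p-1}` in `A` such that
`x₁, …, x_{p-1}, x` is an arithmetic progression. -/
def PCovers (p : ℕ) (A : Set ℕ) (x : ℕ) : Prop :=
  ∃ a d : ℕ, 0 < d ∧ (∀ i < p - 1, a + i * d ∈ A) ∧ a + (p - 1) * d = x

/-- The set of naturals `≤ n` accepted by the greedy algorithm generating the
`p`-Stanley sequence of `A`: an integer is accepted if it belongs to `A`, or if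
it exceeds every element of `A` and adjoining it to the previously accepted
integers keeps the set `p`-free. -/
noncomputable def stanleyUpTo (p : ℕ) (A : Set ℕ) : ℕ → Set ℕ
  | 0 => if 0 ∈ A ∨ ((∀ a ∈ A, a < 0) ∧ IsPFree p {0}) then {0} else ∅
  | n + 1 =>
      if n + 1 ∈ A ∨ ((∀ a ∈ A, a < n + 1) ∧
          IsPFree p (insert (n + 1) (stanleyUpTo p A n))) then
        insert (n + 1) (stanleyUpTo p A n)
      else stanleyUpTo p A n

/-- The `p`-Stanley sequence generated by `A`, as a set of naturals. -/
def StanleySeq (p : ℕ) (A : Set ℕ) : Set ℕ := {x | x ∈ stanleyUpTo p A x}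

/-- `A ⊆ {0, 1, …, N-1}` `p`-covers `x` mod `N`: there are
`x₁ < x₂ < ⋯ < x_{p-1}` in `A` such that `x₁, …, x_{p-1}, x` or
`x₁, …, x_{p-1}, x + N` is an arithmetic progression. -/
def PCoversMod (p N : ℕ) (A : Set ℕ) (x : ℕ) : Prop :=
  ∃ a d : ℕ, 0 < d ∧ (∀ i < p - 1, a + i * d ∈ A) ∧
    (a + (p - 1) * d = x ∨ a + (p - 1) * d = x + N)

/-- `A` is `p`-free mod `N`: `A` contains no `p`-term arithmetic progression
modulo `N` with nonzero common difference. -/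
def IsPFreeMod (p N : ℕ) (A : Set ℕ) : Prop :=
  ¬ ∃ a d : ZMod N, d ≠ 0 ∧ ∀ i : ℕ, i < p → ∃ x ∈ A, (x : ZMod N) = a + (i : ZMod N) * d

/-- `A ⊆ {0, 1, …, N-1}` is a modular `p`-free set mod `N`: it contains `0`,
is `p`-free mod `N`, and `p`-covers mod `N` every `x` with `0 ≤ x < N`, `x ∉ A`. -/
def IsModularPFree (p N : ℕ) (A : Set ℕ) : Prop :=
  A ⊆ Set.Iio N ∧ 0 ∈ A ∧ IsPFreeMod p N A ∧
    ∀ x < N, x ∉ A → PCoversMod p N A x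

/-! ### Auxiliary lemmas for the canonical covering -/

/-- Naturals with no base-`p` digit equal to `p - 1`. -/
def CCGood (p : ℕ) : Set ℕ := {m | ∀ i, m / p ^ i % p ≠ p - 1}

lemma CC_sum_lt {p : ℕ} (hp2 : 2 ≤ p) (k : ℕ) (c : ℕ → ℕ)
    (hc : ∀ i < k, c i < p) :
    ∑ i ∈ Finset.range k, c i * p ^ i < p ^ k := by
  induction k with
  | zero => simp
  | succ n ih =>
    rw [Finset.sum_range_succ, pow_succ]
    have h1 := ih (fun i hi => hc i (by omega))
    have h2 : c n ≤ p - 1 := by have := hc n (by omega); omega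
    have h3 : c n * p ^ n ≤ (p - 1) * p ^ n := Nat.mul_le_mul_right _ h2
    have h4 : p ^ n + (p - 1) * p ^ n = p ^ n * p := by
      have h5 : 1 + (p - 1) = p := by omega
      calc p ^ n + (p - 1) * p ^ n = (1 + (p - 1)) * p ^ n := by ring
        _ = p ^ n * p := by rw [h5]; ring
    omega

lemma CC_sum_split {p : ℕ} (k t : ℕ) (c : ℕ → ℕ) (ht : t ≤ k) :
    ∑ i ∈ Finset.range k, c i * p ^ i =
      (∑ i ∈ Finset.range t, c i * p ^ i) +
        p ^ t * ∑ j ∈ Finset.range (k - t), c (t + j) * p ^ j := by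
  have h2 : (∑ i ∈ Finset.Ico t k, c i * p ^ i)
      = ∑ j ∈ Finset.range (k - t), c (t + j) * p ^ (t + j) :=
    Finset.sum_Ico_eq_sum_range _ t k
  have h3 : p ^ t * (∑ j ∈ Finset.range (k - t), c (t + j) * p ^ j)
      = ∑ j ∈ Finset.range (k - t), c (t + j) * p ^ (t + j) := by
    rw [Finset.mul_sum]
    exact Finset.sum_congr rfl fun j _ => by rw [pow_add]; ring
  have h1 : (∑ i ∈ Finset.Ico 0 t, c i * p ^ i) + (∑ i ∈ Finset.Ico t k, c i * p ^ i)
      = ∑ i ∈ Finset.Ico 0 k, c i * p ^ i :=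
    Finset.sum_Ico_consecutive _ (Nat.zero_le t) ht
  conv_lhs => rw [Finset.range_eq_Ico, ← h1]
  rw [h3, ← h2, Finset.range_eq_Ico]

lemma CC_digit_of_sum {p : ℕ} (hp2 : 2 ≤ p) (k t : ℕ) (c : ℕ → ℕ)
    (hc : ∀ i < k, c i < p) :
    (∑ i ∈ Finset.range k, c i * p ^ i) / p ^ t % p = if t < k then c t else 0 := by
  have hp0 : 0 < p := by omega
  by_cases h : t < k
  · rw [if_pos h, CC_sum_split k t c h.le,
      Nat.add_mul_div_left _ _ (pow_pos hp0 t),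
      Nat.div_eq_of_lt (CC_sum_lt hp2 t c fun i hi => hc i (by omega)), zero_add]
    obtain ⟨m, hm⟩ : ∃ m, k - t = m + 1 := ⟨k - t - 1, by omega⟩
    rw [hm, Finset.sum_range_succ']
    have h5 : ∀ j, c (t + (j + 1)) * p ^ (j + 1) = p * (c (t + (j + 1)) * p ^ j) := by
      intro j; rw [pow_succ]; ring
    rw [Finset.sum_congr rfl (fun j _ => h5 j), ← Finset.mul_sum]
    simp only [Nat.add_zero, pow_zero, mul_one, Nat.mul_add_mod]
    exact Nat.mod_eq_of_lt (hc t h)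
  · rw [if_neg h]
    have h1 : (∑ i ∈ Finset.range k, c i * p ^ i) < p ^ t :=
      lt_of_lt_of_le (CC_sum_lt hp2 k c hc) (Nat.pow_le_pow_right hp0 (by omega))
    rw [Nat.div_eq_of_lt h1]; simp

lemma CC_self_eq_sum {p : ℕ} (x : ℕ) (k : ℕ) :
    x = p ^ k * (x / p ^ k) + ∑ i ∈ Finset.range k, x / p ^ i % p * p ^ i := by
  induction k with
  | zero => simp
  | succ n ih =>
    rw [Finset.sum_range_succ]
    have h1 : p * (x / p ^ (n + 1)) + x / p ^ n % p = x / p ^ n := by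
      rw [pow_succ, ← Nat.div_div_eq_div_mul]; exact Nat.div_add_mod _ p
    calc x = p ^ n * (x / p ^ n) + ∑ i ∈ Finset.range n, x / p ^ i % p * p ^ i := ih
      _ = p ^ n * (p * (x / p ^ (n + 1)) + x / p ^ n % p)
            + ∑ i ∈ Finset.range n, x / p ^ i % p * p ^ i := by rw [h1]
      _ = p ^ (n + 1) * (x / p ^ (n + 1))
            + ((∑ i ∈ Finset.range n, x / p ^ i % p * p ^ i) + x / p ^ n % p * p ^ n) := by
          ring

lemma CC_eq_sum_digits {p : ℕ} {x k : ℕ} (hx : x < p ^ k) :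
    x = ∑ i ∈ Finset.range k, x / p ^ i % p * p ^ i := by
  have h := CC_self_eq_sum (p := p) x k
  rw [Nat.div_eq_of_lt hx, Nat.mul_zero, Nat.zero_add] at h
  exact h

/-- The good set is `p`-free. -/
lemma CC_good_pfree {p : ℕ} (hp : p.Prime) : IsPFree p (CCGood p) := by
  haveI := Fact.mk hp
  rintro ⟨a, dd, hd0, hmem⟩
  set v := dd.factorization p with hv
  set e := dd / p ^ v with he
  have hdd : p ^ v * e = dd := Nat.ordProj_mul_ordCompl_eq_self dd p
  have hpe : ¬ p ∣ e := Nat.not_dvd_ordCompl hp (by omega)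
  have hene : (e : ZMod p) ≠ 0 := by
    rw [Ne, ZMod.natCast_eq_zero_iff]; exact hpe
  set q := a / p ^ v with hq
  set r := a % p ^ v with hr
  set j0 : ZMod p := (((p - 1 : ℕ) : ZMod p) - (q : ZMod p)) * (e : ZMod p)⁻¹ with hj0
  set j : ℕ := j0.val with hj
  have hjp : j < p := j0.val_lt
  have hcast : ((q + j * e : ℕ) : ZMod p) = ((p - 1 : ℕ) : ZMod p) := by
    push_cast
    rw [hj, ZMod.natCast_val, ZMod.cast_id, hj0]
    field_simp
    ring
  have hmod : (q + j * e) % p = p - 1 := by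
    have h1 := congrArg ZMod.val hcast
    have hplt : (p - 1) % p = p - 1 := Nat.mod_eq_of_lt (by have := hp.two_le; omega)
    rwa [ZMod.val_natCast, ZMod.val_natCast, hplt] at h1
  have hkey : (a + j * dd) / p ^ v % p = p - 1 := by
    have ha : a + j * dd = r + p ^ v * (q + j * e) := by
      have h2 : p ^ v * q + r = a := Nat.div_add_mod a (p ^ v)
      calc a + j * dd = a + j * (p ^ v * e) := by rw [hdd]
        _ = (p ^ v * q + r) + j * (p ^ v * e) := by rw [h2]
        _ = r + p ^ v * (q + j * e) := by ring
    rw [ha, Nat.add_mul_div_left _ _ (pow_pos hp.pos v),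
      Nat.div_eq_of_lt (Nat.mod_lt a (pow_pos hp.pos v)), zero_add, hmod]
  exact hmem j hjp v hkey

lemma CC_pfree_subset {p : ℕ} (hp : p.Prime) {A : Set ℕ} (hA : A ⊆ CCGood p) :
    IsPFree p A := by
  rintro ⟨a, d, hd, h⟩
  exact CC_good_pfree hp ⟨a, d, hd, fun i hi => hA (h i hi)⟩

/-- The canonical covering construction. -/
lemma CC_cover {p k x : ℕ} (hp : p.Prime) (h3 : 3 ≤ p) (hxlt : x < p ^ k)
    (hbad : ∃ i, x / p ^ i % p = p - 1) :
    ∃ B Δ : ℕ, 0 < Δ ∧ x = B + (p - 1) * Δ ∧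
      (∀ j, B + j * Δ =
        ∑ i ∈ Finset.range k, (if x / p ^ i % p = p - 1 then j else x / p ^ i % p) * p ^ i) ∧
      (∀ j < p - 1, B + j * Δ ∈ CCGood p ∧ B + j * Δ < p ^ k) := by
  have hp2 : 2 ≤ p := by omega
  have hp0 : 0 < p := by omega
  have hdig : ∀ i, x / p ^ i % p < p := fun i => Nat.mod_lt _ hp0
  set Δ : ℕ := ∑ i ∈ Finset.range k, (if x / p ^ i % p = p - 1 then p ^ i else 0) with hΔ
  set B : ℕ := ∑ i ∈ Finset.range k,
      (if x / p ^ i % p = p - 1 then 0 else x / p ^ i % p) * p ^ i with hB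
  have hform : ∀ j, B + j * Δ =
      ∑ i ∈ Finset.range k, (if x / p ^ i % p = p - 1 then j else x / p ^ i % p) * p ^ i := by
    intro j
    rw [hB, hΔ, Finset.mul_sum, ← Finset.sum_add_distrib]
    exact Finset.sum_congr rfl fun i _ => by
      by_cases h : x / p ^ i % p = p - 1 <;> simp [h]
  have hΔpos : 0 < Δ := by
    obtain ⟨i0, hi0⟩ := hbad
    have hik : i0 < k := by
      by_contra hik
      push_neg at hik
      have hlt : x < p ^ i0 := lt_of_lt_of_le hxlt (Nat.pow_le_pow_right hp0 hik)
      rw [Nat.div_eq_of_lt hlt, Nat.zero_mod] at hi0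
      omega
    have hle : p ^ i0 ≤ Δ := by
      rw [hΔ]
      calc p ^ i0 = if x / p ^ i0 % p = p - 1 then p ^ i0 else 0 := by rw [if_pos hi0]
        _ ≤ _ := Finset.single_le_sum (f := fun i => if x / p ^ i % p = p - 1 then p ^ i else 0)
            (fun i _ => Nat.zero_le _) (Finset.mem_range.mpr hik)
    exact lt_of_lt_of_le (pow_pos hp0 i0) hle
  have hx0 : x = B + (p - 1) * Δ := by
    rw [hform (p - 1),
      show (∑ i ∈ Finset.range k,
          (if x / p ^ i % p = p - 1 then p - 1 else x / p ^ i % p) * p ^ i)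
        = ∑ i ∈ Finset.range k, x / p ^ i % p * p ^ i from
        Finset.sum_congr rfl fun i _ => by
          by_cases h : x / p ^ i % p = p - 1 <;> simp [h]]
    exact CC_eq_sum_digits hxlt
  refine ⟨B, Δ, hΔpos, hx0, hform, ?_⟩
  intro j hj
  have hcb : ∀ i < k, (if x / p ^ i % p = p - 1 then j else x / p ^ i % p) < p := by
    intro i _
    split
    · omega
    · exact hdig i
  constructor
  · intro t
    rw [hform j, CC_digit_of_sum hp2 k t _ hcb]
    split
    · split
      · omega
      · assumption
    · omega
  · rw [hform j]
    exact CC_sum_lt hp2 k _ hcb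

lemma CC_stanleyUpTo (p : ℕ) (hp : p.Prime) (h3 : 3 ≤ p) (n : ℕ) :
    stanleyUpTo p {0} n = {m | m ∈ CCGood p ∧ m ≤ n} := by
  have h0good : 0 ∈ CCGood p := by
    intro i
    rw [Nat.zero_div, Nat.zero_mod]
    omega
  induction n with
  | zero =>
    rw [stanleyUpTo, if_pos (Or.inl (Set.mem_singleton 0))]
    ext m
    simp only [Set.mem_singleton_iff, Set.mem_setOf_eq, Nat.le_zero]
    constructor
    · rintro rfl; exact ⟨h0good, rfl⟩
    · rintro ⟨-, rfl⟩; rfl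
  | succ n ih =>
    rw [stanleyUpTo, ih]
    by_cases hg : (n + 1) ∈ CCGood p
    · rw [if_pos (Or.inr ⟨by rintro a rfl; omega, CC_pfree_subset hp (by
        rintro m (rfl | ⟨h1, -⟩)
        · exact hg
        · exact h1)⟩)]
      ext m
      simp only [Set.mem_insert_iff, Set.mem_setOf_eq]
      constructor
      · rintro (rfl | ⟨h1, h2⟩)
        · exact ⟨hg, le_rfl⟩
        · exact ⟨h1, by omega⟩
      · rintro ⟨h1, h2⟩
        by_cases hm : m = n + 1
        · exact Or.inl hm
        · exact Or.inr ⟨h1, by omega⟩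
    · rw [if_neg ?_]
      · ext m
        simp only [Set.mem_setOf_eq]
        constructor
        · rintro ⟨h1, h2⟩; exact ⟨h1, by omega⟩
        · rintro ⟨h1, h2⟩
          refine ⟨h1, ?_⟩
          by_cases hm : m = n + 1
          · exact absurd (hm ▸ h1) hg
          · omega
      · rintro (h | ⟨-, hfree⟩)
        · simp at h
        · have hbad : ∃ i, (n + 1) / p ^ i % p = p - 1 := by
            by_contra hb
            push_neg at hb
            exact hg fun i => hb i
          have hlt : n + 1 < p ^ (n + 1) := Nat.lt_pow_self (show 1 < p by omega)
          obtain ⟨B, Δ, hΔ, hx0, hform, hmem⟩ := CC_cover hp h3 hlt hbad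
          refine hfree ⟨B, Δ, hΔ, fun i hi => ?_⟩
          by_cases hi' : i < p - 1
          · have h4 := (hmem i hi').1
            have h5 : i * Δ < (p - 1) * Δ := mul_lt_mul_of_pos_right hi' hΔ
            exact Or.inr ⟨h4, by omega⟩
          · have h6 : i = p - 1 := by omega
            rw [h6, ← hx0]
            exact Or.inl rfl

lemma CC_stanley_eq {p : ℕ} (hp : p.Prime) (h3 : 3 ≤ p) :
    StanleySeq p {0} = CCGood p := by
  ext m
  rw [StanleySeq, Set.mem_setOf_eq, CC_stanleyUpTo p hp h3 m]
  exact ⟨fun h => h.1, fun h => ⟨h, le_rfl⟩⟩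

/-- The canonical covering: for `x < p^k` with `x ∉ S_p^k`,
writing `x = Σ dᵢ pⁱ` in base `p` and replacing every digit equal to `p-1`
by `j` gives numbers `x₀ < x₁ < ⋯ < x_{p-2} < x` forming, together with `x`,
an arithmetic progression; each `x_j` lies in `S_p^k`, so the canonical
covering is contained in `S_p^k` and `p`-covers `x`. -/
theorem canonical_covering (p k x : ℕ) (hp : p.Prime) (hodd : Odd p)
    (hk : 0 < k) (hxlt : x < p ^ k)
    (hx : x ∉ {y | y ∈ StanleySeq p {0} ∧ y < p ^ k})
    (d : ℕ → ℕ) (hd : ∀ i, d i = x / p ^ i % p)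
    (xj : ℕ → ℕ)
    (hxj : ∀ j, xj j =
      ∑ i ∈ Finset.range k, (if d i = p - 1 then j else d i) * p ^ i) :
    StrictMonoOn xj (Set.Iio (p - 1)) ∧
    xj (p - 2) < x ∧
    (∃ Δ : ℕ, 0 < Δ ∧ (∀ j < p - 1, xj j = xj 0 + j * Δ) ∧
      x = xj 0 + (p - 1) * Δ) ∧
    (∀ j < p - 1, xj j ∈ {y | y ∈ StanleySeq p {0} ∧ y < p ^ k}) ∧
    PCovers p (xj '' Set.Iio (p - 1)) x := by
  have h3 : 3 ≤ p := by
    obtain ⟨m, hm⟩ := hodd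
    have := hp.two_le
    omega
  have hxg : x ∉ CCGood p := by
    rw [← CC_stanley_eq hp h3]
    intro h
    exact hx ⟨h, hxlt⟩
  have hbad : ∃ i, x / p ^ i % p = p - 1 := by
    by_contra hb
    push_neg at hb
    exact hxg fun i => hb i
  obtain ⟨B, Δ, hΔ, hx0, hform, hmem⟩ := CC_cover hp h3 hxlt hbad
  have hxj' : ∀ j, xj j = B + j * Δ := by
    intro j
    rw [hxj j, hform j]
    exact Finset.sum_congr rfl fun i _ => by rw [hd i]
  refine ⟨?_, ?_, ⟨Δ, hΔ, ?_, ?_⟩, ?_, ?_⟩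
  · intro a _ b _ hab
    rw [hxj' a, hxj' b]
    have := mul_lt_mul_of_pos_right hab hΔ
    omega
  · rw [hxj' (p - 2), hx0]
    have h5 : p - 2 < p - 1 := by omega
    have := mul_lt_mul_of_pos_right h5 hΔ
    omega
  · intro j hj
    rw [hxj' j, hxj' 0]
    omega
  · rw [hxj' 0]
    omega
  · intro j hj
    rw [hxj' j]
    refine ⟨?_, (hmem j hj).2⟩
    rw [CC_stanley_eq hp h3]
    exact (hmem j hj).1
  · refine ⟨B, Δ, hΔ, fun i hi => ⟨i, hi, hxj' i⟩, hx0.symm⟩
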